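/- Let p ≡ 1 (mod 6) be prime. Then: σ_{τ,p} has order 3 in G_p if and only if τ³ ≡ 1 (mod p) and τ ≢ 1 (mod p); there are exactly two elements of order 3 in G_p, and they are of the form σ_k and σ_{k² Mod p} for an integer k with 1 < k < p satisfying k³ ≡ 1 (mod p); both of these permutations fix the cubic MRS function (1, 2, k+2), and the orbit of (1, 2, k+2) under G_p has exactly (p−1)/3 elements. -/
import Mathlib


/-- Boolean functions in `n` variables, with variables indexed by `ZMod n`
(index `i : ZMod n` corresponds to the variable `x_{i+1}` in 1-indexed notation,
so that "`a Mod n`" arithmetic on subscripts becomes arithmetic in `ZMod n`). -/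
abbrev BF (n : ℕ) := (ZMod n → ZMod 2) → ZMod 2

/-- The cubic MRS function `(1,j,k)` in `n` variables:
`x ↦ Σ_{i=1}^n x_i x_{(i+j-1) Mod n} x_{(i+k-1) Mod n}`, the sum taken in `GF(2)`. -/
def cubicMRS (n : ℕ) [NeZero n] (j k : ℕ) : BF n :=
  fun x => ∑ i : ZMod n,
    x i * x (i + ((j - 1 : ℕ) : ZMod n)) * x (i + ((k - 1 : ℕ) : ZMod n))

/-- `C_n`: the set of all cubic MRS functions `(1,j,k)`, `1 < j < k ≤ n`, in `n` variables. -/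
def cubicSet (n : ℕ) [NeZero n] : Set (BF n) :=
  {f | ∃ j k : ℕ, 1 < j ∧ j < k ∧ k ≤ n ∧ f = cubicMRS n j k}

/-- The set of cubic MRS functions `(1,j,k)` with `1 < j, k ≤ n`, `j ≠ k`. -/
def cubicSetNe (n : ℕ) [NeZero n] : Set (BF n) :=
  {f | ∃ j k : ℕ, 1 < j ∧ j ≤ n ∧ 1 < k ∧ k ≤ n ∧ j ≠ k ∧ f = cubicMRS n j k}

/-- The action of a permutation `μ` of the variables on a Boolean function:
`(μ·f)(x₁,…,xₙ) = f(x_{μ(1)},…,x_{μ(n)})`. -/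
def permAct {n : ℕ} (μ : Equiv.Perm (ZMod n)) (f : BF n) : BF n :=
  fun x => f (fun i => x (μ i))

/-- A Boolean function is rotation symmetric if it is invariant under the cyclic
shift of the variables. -/
def rotSym {n : ℕ} (f : BF n) : Prop :=
  ∀ x : ZMod n → ZMod 2, f (fun i => x (i + 1)) = f x

/-- A permutation `μ` preserves rotation symmetry (for cubic MRS functions in `n`
variables) if `μ·f` is rotation symmetric for every cubic MRS function `f`. -/
def preservesRS (n : ℕ) [NeZero n] (μ : Equiv.Perm (ZMod n)) : Prop :=
  ∀ f ∈ cubicSetNe n, rotSym (permAct μ f)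

/-- The permutation `σ_{τ,n} : i ↦ ((i-1)τ + 1) Mod n` of the variables, for `τ` a
unit mod `n`; in the 0-indexed coordinates used here it is `i ↦ τ·i` on `ZMod n`. -/
def sigmaPerm {n : ℕ} (u : (ZMod n)ˣ) : Equiv.Perm (ZMod n) where
  toFun := fun i => (u : ZMod n) * i
  invFun := fun i => ((u⁻¹ : (ZMod n)ˣ) : ZMod n) * i
  left_inv := fun i => by simp [← mul_assoc]
  right_inv := fun i => by simp [← mul_assoc]

/-- The orbit of a Boolean function `f` under the action of the group
`G_n = {σ_{τ,n} : gcd(τ,n) = 1}`. -/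
def orbit (n : ℕ) [NeZero n] (f : BF n) : Set (BF n) :=
  {g | ∃ u : (ZMod n)ˣ, g = permAct (sigmaPerm u) f}

/-- The set of orbits of the action of `G_n` on the set `C_n` of cubic MRS functions. -/
def orbitsOn (n : ℕ) [NeZero n] : Set (Set (BF n)) :=
  {S | ∃ f ∈ cubicSet n, S = orbit n f}


def sigmaHom (n : ℕ) : (ZMod n)ˣ →* Equiv.Perm (ZMod n) where
  toFun := sigmaPerm
  map_one' := by ext i; simp [sigmaPerm]
  map_mul' := fun u v => by ext i; simp [sigmaPerm, mul_assoc]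

lemma sigmaHom_injective (n : ℕ) [NeZero n] : Function.Injective (sigmaHom n) := by
  intro u v h
  have := congrArg (fun σ : Equiv.Perm (ZMod n) => σ 1) h
  simp only [sigmaHom, MonoidHom.coe_mk, OneHom.coe_mk, sigmaPerm, Equiv.coe_fn_mk,
    mul_one] at this
  exact Units.ext this

lemma orderOf_sigmaPerm {n : ℕ} [NeZero n] (u : (ZMod n)ˣ) :
    orderOf (sigmaPerm u) = orderOf u :=
  orderOf_injective (sigmaHom n) (sigmaHom_injective n) u

lemma permAct_one {n : ℕ} (f : BF n) : permAct 1 f = f := rfl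

lemma permAct_mul {n : ℕ} (μ ν : Equiv.Perm (ZMod n)) (f : BF n) :
    permAct (μ * ν) f = permAct μ (permAct ν f) := rfl

lemma permAct_injective {n : ℕ} (μ : Equiv.Perm (ZMod n)) :
    Function.Injective (permAct μ) := by
  intro f g h
  have := congrArg (permAct μ⁻¹) h
  simpa [← permAct_mul, permAct_one] using this

lemma permAct_sigma_mul {n : ℕ} (u v : (ZMod n)ˣ) (f : BF n) :
    permAct (sigmaPerm (u * v)) f = permAct (sigmaPerm u) (permAct (sigmaPerm v) f) := by
  rw [show sigmaPerm (u * v) = sigmaPerm u * sigmaPerm v from map_mul (sigmaHom n) u v]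
  rfl

lemma cubic_eval {p : ℕ} [NeZero p] {k : ℕ} {c : ZMod p} (hkc : (k : ZMod p) = c)
    (x : ZMod p → ZMod 2) :
    cubicMRS p 2 (k + 2) x = ∑ i : ZMod p, x i * x (i + 1) * x (i + (c + 1)) := by
  simp only [cubicMRS]
  apply Finset.sum_congr rfl
  intro i _
  rw [show ((2 - 1 : ℕ) : ZMod p) = 1 from by norm_num,
    show ((k + 2 - 1 : ℕ) : ZMod p) = c + 1 from by
      rw [show k + 2 - 1 = k + 1 from by omega]; push_cast [hkc]; ring]

lemma fix_of_coe_c {p : ℕ} [Fact p.Prime] {c : ZMod p} (hc : c ^ 2 + c + 1 = 0)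
    {k : ℕ} (hkc : (k : ZMod p) = c) {w : (ZMod p)ˣ} (hw : (w : ZMod p) = c) :
    permAct (sigmaPerm w) (cubicMRS p 2 (k + 2)) = cubicMRS p 2 (k + 2) := by
  have hc0 : c ≠ 0 := by rintro rfl; simpa using hc
  funext x
  have h1 : permAct (sigmaPerm w) (cubicMRS p 2 (k + 2)) x
      = ∑ i : ZMod p, x (c * i) * x (c * i + c) * x (c * i - 1) := by
    show cubicMRS p 2 (k + 2) (fun i => x (sigmaPerm w i)) = _
    rw [cubic_eval hkc]
    apply Finset.sum_congr rfl
    intro i _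
    simp only [sigmaPerm, Equiv.coe_fn_mk, hw]
    rw [show c * (i + 1) = c * i + c from by ring,
      show c * (i + (c + 1)) = c * i - 1 from by linear_combination hc]
  rw [h1, cubic_eval hkc]
  refine Fintype.sum_equiv ((Equiv.mulLeft₀ c hc0).trans (Equiv.subRight (1 : ZMod p))) _ _ ?_
  intro i
  show x (c * i) * x (c * i + c) * x (c * i - 1)
      = x (c * i - 1) * x (c * i - 1 + 1) * x (c * i - 1 + (c + 1))
  rw [show c * i - 1 + 1 = c * i from by ring,
    show c * i - 1 + (c + 1) = c * i + c from by ring]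
  ring

lemma fix_of_coe_c_sq {p : ℕ} [Fact p.Prime] {c : ZMod p} (hc : c ^ 2 + c + 1 = 0)
    {k : ℕ} (hkc : (k : ZMod p) = c) {w : (ZMod p)ˣ} (hw : (w : ZMod p) = c ^ 2) :
    permAct (sigmaPerm w) (cubicMRS p 2 (k + 2)) = cubicMRS p 2 (k + 2) := by
  have hc0 : c ≠ 0 := by rintro rfl; simpa using hc
  have hc20 : c ^ 2 ≠ 0 := pow_ne_zero 2 hc0
  funext x
  have h1 : permAct (sigmaPerm w) (cubicMRS p 2 (k + 2)) x
      = ∑ i : ZMod p, x (c ^ 2 * i) * x (c ^ 2 * i + c ^ 2) * x (c ^ 2 * i + c ^ 2 + 1) := by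
    show cubicMRS p 2 (k + 2) (fun i => x (sigmaPerm w i)) = _
    rw [cubic_eval hkc]
    apply Finset.sum_congr rfl
    intro i _
    simp only [sigmaPerm, Equiv.coe_fn_mk, hw]
    rw [show c ^ 2 * (i + 1) = c ^ 2 * i + c ^ 2 from by ring,
      show c ^ 2 * (i + (c + 1)) = c ^ 2 * i + c ^ 2 + 1 from by linear_combination (c - 1) * hc]
  rw [h1, cubic_eval hkc]
  refine Fintype.sum_equiv ((Equiv.mulLeft₀ (c ^ 2) hc20).trans (Equiv.addRight (c ^ 2))) _ _ ?_
  intro i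
  show x (c ^ 2 * i) * x (c ^ 2 * i + c ^ 2) * x (c ^ 2 * i + c ^ 2 + 1)
      = x (c ^ 2 * i + c ^ 2) * x (c ^ 2 * i + c ^ 2 + 1) * x (c ^ 2 * i + c ^ 2 + (c + 1))
  rw [show c ^ 2 * i + c ^ 2 + (c + 1) = c ^ 2 * i from by linear_combination hc]
  ring

lemma alg_lemma {p : ℕ} [Fact p.Prime] (h3 : (3 : ZMod p) ≠ 0)
    {c a ω : ZMod p} (hc : c ^ 2 + c + 1 = 0) (hω : ω ≠ 0)
    (hc0 : c ≠ 0) (hc1 : c ≠ 1) (hcm1 : c ≠ -1) (hcm2 : c ≠ -2)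
    (m1 : a = 0 ∨ a = 1 ∨ a = c + 1)
    (m2 : a + ω = 0 ∨ a + ω = 1 ∨ a + ω = c + 1)
    (m3 : a + ω * (c + 1) = 0 ∨ a + ω * (c + 1) = 1 ∨ a + ω * (c + 1) = c + 1) :
    ω = 1 ∨ ω = c ∨ ω = c ^ 2 := by
  rcases m1 with rfl | rfl | rfl
  · rcases m2 with h | h | h
    · exact absurd (by simpa using h) hω
    · exact Or.inl (by linear_combination h)
    · have hω2 : ω = c + 1 := by linear_combination h
      subst hω2
      rcases m3 with h' | h' | h'
      · exact absurd (by linear_combination (c + 2) * hc - (c + 1) * h' : (1 : ZMod p) = 0)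
          one_ne_zero
      · exact absurd (by linear_combination h' - hc : c = 1) hc1
      · exact absurd (by linear_combination hc - h' : (1 : ZMod p) = 0) one_ne_zero
  · rcases m2 with h | h | h
    · have hω2 : ω = -1 := by linear_combination h
      subst hω2
      rcases m3 with h' | h' | h'
      · exact absurd (by linear_combination -h' : c = 0) hc0
      · exact absurd (by linear_combination -h' : c = -1) hcm1
      · exact absurd (by linear_combination 4 * hc + (2 * c + 1) * h' : (3 : ZMod p) = 0) h3
    · exact absurd (by linear_combination h : ω = 0) hω
    · exact Or.inr (Or.inl (by linear_combination h))
  · rcases m2 with h | h | h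
    · exact Or.inr (Or.inr (by linear_combination h - hc))
    · have hω2 : ω = -c := by linear_combination h
      subst hω2
      rcases m3 with h' | h' | h'
      · exact absurd (by linear_combination hc + h' : c = -2) hcm2
      · exact absurd (by linear_combination hc + h' : c = -1) hcm1
      · exact absurd (by linear_combination hc + h' : (1 : ZMod p) = 0) one_ne_zero
    · exact absurd (by linear_combination h : ω = 0) hω

lemma stab_coe {p : ℕ} [Fact p.Prime] (h2 : (1 + 1 : ZMod p) ≠ 0) (h3 : (3 : ZMod p) ≠ 0)
    {c : ZMod p} (hc : c ^ 2 + c + 1 = 0) {k : ℕ} (hkc : (k : ZMod p) = c)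
    {w : (ZMod p)ˣ}
    (hw : permAct (sigmaPerm w) (cubicMRS p 2 (k + 2)) = cubicMRS p 2 (k + 2)) :
    (w : ZMod p) = 1 ∨ (w : ZMod p) = c ∨ (w : ZMod p) = c ^ 2 := by
  classical
  have hc0 : c ≠ 0 := by rintro rfl; simp at hc
  have hc1 : c ≠ 1 := by rintro rfl; exact h3 (by linear_combination hc)
  have hcm1 : c ≠ -1 := by
    intro h; rw [h] at hc
    exact one_ne_zero (α := ZMod p) (by linear_combination hc)
  have hcm2 : c ≠ -2 := by
    intro h; rw [h] at hc
    exact h3 (by linear_combination hc)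
  have hω : (w : ZMod p) ≠ 0 := Units.ne_zero w
  set χ : ZMod p → ZMod 2 := fun a => if a = 0 ∨ a = 1 ∨ a = c + 1 then 1 else 0 with hχ
  have χmem : ∀ a, χ a ≠ 0 → (a = 0 ∨ a = 1 ∨ a = c + 1) := by
    intro a h
    by_contra hn
    simp only [hχ, if_neg hn] at h
    exact h rfl
  have χne : ∀ a, a ≠ 0 → a ≠ 1 → a ≠ c + 1 → χ a = 0 := by
    intro a u1 u2 u3
    simp only [hχ]
    rw [if_neg (by tauto)]
  have hRHS : cubicMRS p 2 (k + 2) χ = 1 := by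
    rw [cubic_eval hkc]
    rw [Finset.sum_eq_single_of_mem 0 (Finset.mem_univ _)]
    · have e0 : χ 0 = 1 := by simp [hχ]
      have e1 : χ (0 + 1) = 1 := by norm_num [hχ]
      have e2 : χ (0 + (c + 1)) = 1 := by norm_num [hχ]
      rw [e0, e1, e2, mul_one, mul_one]
    · intro b _ hb
      by_cases hb0 : χ b = 0
      · rw [hb0, zero_mul, zero_mul]
      · rcases χmem b hb0 with rfl | rfl | rfl
        · exact absurd rfl hb
        · have : χ (1 + 1) = 0 := by
            refine χne _ h2 ?_ ?_
            · intro h; exact one_ne_zero (α := ZMod p) (by linear_combination h)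
            · intro h; exact hc1 (by linear_combination -h)
          rw [this, mul_zero, zero_mul]
        · have : χ (c + 1 + 1) = 0 := by
            refine χne _ ?_ ?_ ?_
            · intro h; exact hcm2 (by linear_combination h)
            · intro h; exact hcm1 (by linear_combination h)
            · intro h; exact one_ne_zero (α := ZMod p) (by linear_combination h)
          rw [this, mul_zero, zero_mul]
  have hLHS : ∑ i : ZMod p,
      χ ((w : ZMod p) * i) * χ ((w : ZMod p) * i + (w : ZMod p))
        * χ ((w : ZMod p) * i + (w : ZMod p) * (c + 1)) = 1 := by
    have h0 : permAct (sigmaPerm w) (cubicMRS p 2 (k + 2)) χ = 1 := by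
      rw [hw]; exact hRHS
    rw [← h0]
    show _ = cubicMRS p 2 (k + 2) (fun i => χ (sigmaPerm w i))
    rw [cubic_eval hkc]
    apply Finset.sum_congr rfl
    intro i _
    simp only [sigmaPerm, Equiv.coe_fn_mk]
    rw [show (w : ZMod p) * (i + 1) = (w : ZMod p) * i + (w : ZMod p) from by ring,
      show (w : ZMod p) * (i + (c + 1))
          = (w : ZMod p) * i + (w : ZMod p) * (c + 1) from by ring]
  obtain ⟨i, -, hi⟩ := Finset.exists_ne_zero_of_sum_ne_zero
    (by rw [hLHS]; exact one_ne_zero)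
  have f1 := left_ne_zero_of_mul (left_ne_zero_of_mul hi)
  have f2 := right_ne_zero_of_mul (left_ne_zero_of_mul hi)
  have f3 := right_ne_zero_of_mul hi
  exact alg_lemma h3 hc hω hc0 hc1 hcm1 hcm2 (χmem _ f1) (χmem _ f2) (χmem _ f3)

/-- For a prime `p ≡ 1 (mod 6)`: `σ_{τ,p}` has order 3 iff `τ³ ≡ 1` and `τ ≢ 1 (mod p)`;
there are exactly two elements of order 3 in `G_p`, namely `σ_k` and `σ_{k² Mod p}` for
an integer `1 < k < p` with `k³ ≡ 1 (mod p)`; both fix the cubic MRS function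
`(1,2,k+2)`, whose orbit under `G_p` has exactly `(p-1)/3` elements. -/
theorem order_three_elements (p : ℕ) [NeZero p] (hp : p.Prime) (h1 : p % 6 = 1) :
    (∀ (τ : ℕ) (h : Nat.Coprime τ p),
      orderOf (sigmaPerm (ZMod.unitOfCoprime τ h)) = 3 ↔
        (τ ^ 3 ≡ 1 [MOD p] ∧ ¬ τ ≡ 1 [MOD p])) ∧
    (∃ (k : ℕ) (hk : Nat.Coprime k p), 1 < k ∧ k < p ∧ k ^ 3 ≡ 1 [MOD p] ∧
      {σ : Equiv.Perm (ZMod p) |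
          (∃ u : (ZMod p)ˣ, σ = sigmaPerm u) ∧ orderOf σ = 3} =
        {sigmaPerm (ZMod.unitOfCoprime k hk),
          sigmaPerm ((ZMod.unitOfCoprime k hk) ^ 2)} ∧
      permAct (sigmaPerm (ZMod.unitOfCoprime k hk)) (cubicMRS p 2 (k + 2)) =
        cubicMRS p 2 (k + 2) ∧
      permAct (sigmaPerm ((ZMod.unitOfCoprime k hk) ^ 2)) (cubicMRS p 2 (k + 2)) =
        cubicMRS p 2 (k + 2) ∧
      (orbit p (cubicMRS p 2 (k + 2))).ncard = (p - 1) / 3) := by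
  classical
  haveI : Fact p.Prime := ⟨hp⟩
  haveI : Fact (Nat.Prime 3) := ⟨by norm_num⟩
  have hp7 : 7 ≤ p := by
    have := hp.two_le
    omega
  have h2Z : (1 + 1 : ZMod p) ≠ 0 := by
    intro h
    have : ((2 : ℕ) : ZMod p) = 0 := by push_cast; linear_combination h
    have hd : p ∣ 2 := (ZMod.natCast_eq_zero_iff 2 p).mp this
    have := Nat.le_of_dvd (by norm_num) hd
    omega
  have h3Z : (3 : ZMod p) ≠ 0 := by
    intro h
    have : ((3 : ℕ) : ZMod p) = 0 := by push_cast; linear_combination h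
    have hd : p ∣ 3 := (ZMod.natCast_eq_zero_iff 3 p).mp this
    have := Nat.le_of_dvd (by norm_num) hd
    omega
  -- Part 1
  have hord : ∀ (τ : ℕ) (h : Nat.Coprime τ p),
      orderOf (sigmaPerm (ZMod.unitOfCoprime τ h)) = 3 ↔
        (τ ^ 3 ≡ 1 [MOD p] ∧ ¬ τ ≡ 1 [MOD p]) := by
    intro τ h
    rw [orderOf_sigmaPerm]
    constructor
    · intro h3
      have hcube : (ZMod.unitOfCoprime τ h) ^ 3 = 1 := by
        rw [← h3]; exact pow_orderOf_eq_one _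
      have hne : (ZMod.unitOfCoprime τ h) ≠ 1 := by
        intro h1'; rw [h1'] at h3; simp at h3
      constructor
      · have := congrArg (Units.val) hcube
        rw [← ZMod.natCast_eq_natCast_iff]
        push_cast
        simpa [ZMod.coe_unitOfCoprime] using this
      · intro hmod
        apply hne
        apply Units.ext
        rw [ZMod.coe_unitOfCoprime]
        have : ((τ : ℕ) : ZMod p) = ((1 : ℕ) : ZMod p) :=
          (ZMod.natCast_eq_natCast_iff _ _ _).mpr hmod
        simpa using this
    · rintro ⟨hcube, hne⟩
      refine orderOf_eq_prime ?_ ?_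
      · apply Units.ext
        have : ((τ ^ 3 : ℕ) : ZMod p) = ((1 : ℕ) : ZMod p) :=
          (ZMod.natCast_eq_natCast_iff _ _ _).mpr hcube
        push_cast at this
        simpa [ZMod.coe_unitOfCoprime] using this
      · intro h1'
        apply hne
        rw [← ZMod.natCast_eq_natCast_iff]
        have := congrArg Units.val h1'
        simpa [ZMod.coe_unitOfCoprime] using this
  refine ⟨hord, ?_⟩
  -- find element of order 3
  have hcard : Fintype.card (ZMod p)ˣ = p - 1 := by
    rw [ZMod.card_units_eq_totient, Nat.totient_prime hp]
  have h3dvd : 3 ∣ Fintype.card (ZMod p)ˣ := by rw [hcard]; omega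
  obtain ⟨g, hg⟩ := exists_prime_orderOf_dvd_card 3 h3dvd
  have hg3 : g ^ 3 = 1 := by rw [← hg]; exact pow_orderOf_eq_one g
  have hgne1 : g ≠ 1 := by intro h; rw [h] at hg; simp at hg
  have hg2ne1 : g ^ 2 ≠ 1 := by
    intro h
    have := orderOf_dvd_of_pow_eq_one h
    rw [hg] at this
    omega
  have hgg : g ≠ g ^ 2 := by
    intro h
    have h' : g * 1 = g * g := by rw [mul_one, ← sq]; exact h
    exact hgne1 (mul_left_cancel h').symm
  have hordg2 : orderOf (g ^ 2) = 3 := by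
    refine orderOf_eq_prime ?_ hg2ne1
    rw [← pow_mul, show 2 * 3 = 3 * 2 from rfl, pow_mul, hg3, one_pow]
  set c : ZMod p := (g : ZMod p) with hcdef
  have hcne1 : c ≠ 1 := fun h => hgne1 (Units.ext (by rw [Units.val_one]; exact h))
  have hc3 : c ^ 3 = 1 := by
    rw [hcdef, ← Units.val_pow_eq_pow_val, hg3, Units.val_one]
  have hc : c ^ 2 + c + 1 = 0 := by
    have hfac : (c - 1) * (c ^ 2 + c + 1) = 0 := by linear_combination hc3
    rcases mul_eq_zero.mp hfac with h | h
    · exact absurd (by linear_combination h : c = 1) hcne1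
    · exact h
  set k : ℕ := c.val with hkdef
  have hkc : ((k : ℕ) : ZMod p) = c := by
    rw [hkdef, ZMod.natCast_val, ZMod.cast_id]
  have hkco : Nat.Coprime k p := ZMod.val_coe_unit_coprime g
  have hk_lt : k < p := ZMod.val_lt c
  have hc0 : c ≠ 0 := Units.ne_zero g
  have hk_gt : 1 < k := by
    rcases Nat.lt_or_ge k 2 with hlt | hge
    · interval_cases k
      · exact absurd (by simpa using hkc.symm) hc0
      · exact absurd (by simpa using hkc.symm) hcne1
    · omega
  have hgu : ZMod.unitOfCoprime k hkco = g :=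
    Units.ext (by rw [ZMod.coe_unitOfCoprime, hkc])
  have hmod : k ^ 3 ≡ 1 [MOD p] := by
    rw [← ZMod.natCast_eq_natCast_iff]
    push_cast [hkc, hc3]
    rfl
  -- element of order 3 are exactly g, g^2
  have horder3 : ∀ u : (ZMod p)ˣ, orderOf u = 3 ↔ (u = g ∨ u = g ^ 2) := by
    intro u
    constructor
    · intro hu
      have hfil := IsCyclic.card_orderOf_eq_totient (α := (ZMod p)ˣ) (d := 3) h3dvd
      have hsub : ({g, g ^ 2} : Finset (ZMod p)ˣ)
          ⊆ Finset.univ.filter (fun a => orderOf a = 3) := by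
        intro a ha
        rcases Finset.mem_insert.mp ha with rfl | ha
        · simp [hg]
        · rw [Finset.mem_singleton.mp ha]
          simp [hordg2]
      have hc2 : ({g, g ^ 2} : Finset (ZMod p)ˣ).card = 2 := Finset.card_pair hgg
      have heq : ({g, g ^ 2} : Finset (ZMod p)ˣ)
          = Finset.univ.filter (fun a => orderOf a = 3) := by
        apply Finset.eq_of_subset_of_card_le hsub
        rw [hfil, hc2]
        decide
      have hu' : u ∈ Finset.univ.filter (fun a => orderOf a = 3) := by simp [hu]
      rw [← heq] at hu'
      simpa using hu'
    · rintro (rfl | rfl)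
      · exact hg
      · exact hordg2
  have hset : {σ : Equiv.Perm (ZMod p) |
      (∃ u : (ZMod p)ˣ, σ = sigmaPerm u) ∧ orderOf σ = 3} =
      {sigmaPerm (ZMod.unitOfCoprime k hkco),
        sigmaPerm ((ZMod.unitOfCoprime k hkco) ^ 2)} := by
    rw [hgu]
    ext σ
    simp only [Set.mem_setOf_eq, Set.mem_insert_iff, Set.mem_singleton_iff]
    constructor
    · rintro ⟨⟨u, rfl⟩, h3'⟩
      rw [orderOf_sigmaPerm] at h3'
      rcases (horder3 u).mp h3' with rfl | rfl
      · exact Or.inl rfl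
      · exact Or.inr rfl
    · rintro (rfl | rfl)
      · exact ⟨⟨g, rfl⟩, by rw [orderOf_sigmaPerm]; exact hg⟩
      · exact ⟨⟨g ^ 2, rfl⟩, by rw [orderOf_sigmaPerm]; exact hordg2⟩
  -- the fixes
  have hwcoe : ((ZMod.unitOfCoprime k hkco : (ZMod p)ˣ) : ZMod p) = c := by
    rw [ZMod.coe_unitOfCoprime, hkc]
  have hw2coe : (((ZMod.unitOfCoprime k hkco) ^ 2 : (ZMod p)ˣ) : ZMod p) = c ^ 2 := by
    rw [Units.val_pow_eq_pow_val, hwcoe]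
  have hfix1 : permAct (sigmaPerm (ZMod.unitOfCoprime k hkco)) (cubicMRS p 2 (k + 2)) =
      cubicMRS p 2 (k + 2) := fix_of_coe_c hc hkc hwcoe
  have hfix2 : permAct (sigmaPerm ((ZMod.unitOfCoprime k hkco) ^ 2)) (cubicMRS p 2 (k + 2)) =
      cubicMRS p 2 (k + 2) := fix_of_coe_c_sq hc hkc hw2coe
  -- orbit count
  set f : BF p := cubicMRS p 2 (k + 2) with hfdef
  set φ : (ZMod p)ˣ → BF p := fun u => permAct (sigmaPerm u) f with hφdef
  have hstabiff : ∀ w : (ZMod p)ˣ, φ w = f ↔ (w = 1 ∨ w = g ∨ w = g ^ 2) := by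
    intro w
    constructor
    · intro hwfix
      rcases stab_coe h2Z h3Z hc hkc hwfix with h | h | h
      · exact Or.inl (Units.ext (by simpa using h))
      · exact Or.inr (Or.inl (Units.ext (by rw [h])))
      · refine Or.inr (Or.inr (Units.ext ?_))
        rw [h, Units.val_pow_eq_pow_val]
    · rintro (rfl | rfl | rfl)
      · show permAct (sigmaPerm 1) f = f
        rw [show sigmaPerm (1 : (ZMod p)ˣ) = 1 from map_one (sigmaHom p)]
        rfl
      · exact fix_of_coe_c hc hkc rfl
      · exact fix_of_coe_c_sq hc hkc (by rw [Units.val_pow_eq_pow_val])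
  have hfiber : ∀ u w : (ZMod p)ˣ, φ w = φ u ↔ (w = u ∨ w = u * g ∨ w = u * g ^ 2) := by
    intro u w
    have hw' : φ w = permAct (sigmaPerm u) (φ (u⁻¹ * w)) := by
      rw [hφdef]
      show permAct (sigmaPerm w) f = _
      rw [← permAct_sigma_mul, mul_inv_cancel_left]
    have key : φ w = φ u ↔ φ (u⁻¹ * w) = f := by
      rw [hw']
      exact ⟨fun h => permAct_injective _ h, fun h => by rw [h]⟩
    rw [key, hstabiff]
    constructor
    · rintro (h | h | h)
      · exact Or.inl (by rwa [inv_mul_eq_one, eq_comm] at h)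
      · exact Or.inr (Or.inl (by rwa [inv_mul_eq_iff_eq_mul] at h))
      · exact Or.inr (Or.inr (by rwa [inv_mul_eq_iff_eq_mul] at h))
    · rintro (rfl | rfl | rfl)
      · exact Or.inl (by rw [inv_mul_cancel])
      · exact Or.inr (Or.inl (by rw [inv_mul_cancel_left]))
      · exact Or.inr (Or.inr (by rw [inv_mul_cancel_left]))
  have horbit : (orbit p f).ncard = (p - 1) / 3 := by
    have hrange : orbit p f = Set.range φ := by
      ext b
      constructor
      · rintro ⟨u, rfl⟩; exact ⟨u, rfl⟩
      · rintro ⟨u, rfl⟩; exact ⟨u, rfl⟩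
    have himg : Set.range φ = ↑(Finset.univ.image φ) := by
      rw [Finset.coe_image, Finset.coe_univ, Set.image_univ]
    have hcount : Finset.univ.card
        = ∑ b ∈ Finset.univ.image φ, (Finset.univ.filter (fun w => φ w = b)).card :=
      Finset.card_eq_sum_card_fiberwise (fun x _ => Finset.mem_image_of_mem φ (Finset.mem_univ x))
    have hfib3 : ∀ b ∈ Finset.univ.image φ,
        (Finset.univ.filter (fun w => φ w = b)).card = 3 := by
      intro b hb
      obtain ⟨u, -, rfl⟩ := Finset.mem_image.mp hb
      have hflt : Finset.univ.filter (fun w => φ w = φ u) = {u, u * g, u * g ^ 2} := by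
        ext w
        simp [hfiber u w]
      rw [hflt]
      have d1 : u ≠ u * g := by
        intro h
        exact hgne1 (mul_left_cancel (by rw [mul_one]; exact h)).symm
      have d2 : u ≠ u * g ^ 2 := by
        intro h
        exact hg2ne1 (mul_left_cancel (by rw [mul_one]; exact h)).symm
      have d3 : u * g ≠ u * g ^ 2 := fun h => hgg (mul_left_cancel h)
      rw [Finset.card_insert_of_notMem (by simp [d1, d2]),
        Finset.card_insert_of_notMem (by simp [d3]), Finset.card_singleton]
    have hkey : p - 1 = 3 * (Finset.univ.image φ).card := by
      have : Fintype.card (ZMod p)ˣ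
          = ∑ _b ∈ Finset.univ.image φ, 3 := by
        rw [Fintype.card, hcount]
        exact Finset.sum_congr rfl hfib3
      rw [hcard] at this
      rw [this, Finset.sum_const, smul_eq_mul, mul_comm]
    rw [hrange, himg, Set.ncard_coe_finset]
    omega
  exact ⟨k, hkco, hk_gt, hk_lt, hmod, hset, hfix1, hfix2, horbit⟩
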